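/- Let $E$ be a Banach space with a normalized 1-unconditional basis $(e_n)$ with biorthogonal functionals $(e_n^*)$. Let $(N_n)$ be a strictly increasing sequence of positive reals, and for each $n$ define $f_n: E^*\to[0,\infty)$ by $f_n(x^*)=(|x^*(e_n)|-N_n\max_{m<n}|x^*(e_m)|)^+\cdot\prod_{m>n} g_m(|x^*(e_m)|/|x^*(e_n)|)$ if $x^*(e_n)\ne 0$ and $f_n(x^*)=0$ otherwise, where each $g_m:[0,\infty)\to[0,1]$ is continuous decreasing with $g_m(t)=1$ for $t\le M_m$ and $g_m(t)=0$ for $t\ge N_m$ (and $M_m<N_m$). Then the functions $f_n$ are pairwise disjoint in the pointwise order: for $n<l$ and every $x^*\in E^*$, $\min(f_n(x^*), f_l(x^*))=0$. -/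
import Mathlib


open Finset

/-- Disjointness of the functions `f_n` in the proof of the isometric lattice-lifting
property for Banach spaces with a normalized 1-unconditional basis:
`f_n(x*) = (|x*(e_n)| - N_n·max_{m<n}|x*(e_m)|)⁺ · ∏_{m>n} g_m(|x*(e_m)|/|x*(e_n)|)`
(with the infinite product being the decreasing limit, i.e. infimum, of the partial
products, and `f_n(x*) = 0` when `x*(e_n) = 0`). For `n < l` and every `x*`,
`min (f_n(x*), f_l(x*)) = 0`. -/
theorem fbl_building_blocks_pairwise_disjoint
    {E : Type*} [NormedAddCommGroup E] [NormedSpace ℝ E] [CompleteSpace E]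
    (e : ℕ → E) (hnorm : ∀ m, ‖e m‖ = 1)
    (estar : ℕ → E →L[ℝ] ℝ)
    (hbi : ∀ i j, estar i (e j) = if i = j then (1 : ℝ) else 0)
    (huncond : ∀ (m : ℕ) (a b : ℕ → ℝ), (∀ i, |a i| ≤ |b i|) →
      ‖∑ i ∈ Finset.range m, a i • e i‖ ≤ ‖∑ i ∈ Finset.range m, b i • e i‖)
    (M N : ℕ → ℝ) (hNmono : StrictMono N) (hMN : ∀ m, 0 < M m ∧ M m < N m)
    (g : ℕ → ℝ → ℝ)
    (hgcont : ∀ m, Continuous (g m)) (hganti : ∀ m, Antitone (g m))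
    (hg01 : ∀ m t, 0 ≤ t → g m t ∈ Set.Icc (0 : ℝ) 1)
    (hgone : ∀ m t, 0 ≤ t → t ≤ M m → g m t = 1)
    (hgzero : ∀ m t, N m ≤ t → g m t = 0)
    (f : ℕ → (E →L[ℝ] ℝ) → ℝ)
    (hdef : ∀ (n : ℕ) (xstar : E →L[ℝ] ℝ), f n xstar =
      if xstar (e n) = 0 then 0 else
        max (|xstar (e n)| - N n * sSup ((fun m => |xstar (e m)|) '' Set.Iio n)) 0 *
          ⨅ k : ℕ, ∏ m ∈ Finset.Ioc n (n + k), g m (|xstar (e m)| / |xstar (e n)|)) :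
    ∀ n l : ℕ, n < l → ∀ xstar : E →L[ℝ] ℝ, min (f n xstar) (f l xstar) = 0 := by

  intro n l hnl xstar
  have hprod_nonneg : ∀ (j : ℕ) (k : ℕ),
      0 ≤ ∏ m ∈ Finset.Ioc j (j + k), g m (|xstar (e m)| / |xstar (e j)|) := by
    intro j k
    refine Finset.prod_nonneg fun m _ => ?_
    exact (hg01 m _ (div_nonneg (abs_nonneg _) (abs_nonneg _))).1
  have hfnn : ∀ j : ℕ, 0 ≤ f j xstar := by
    intro j
    rw [hdef]
    split
    · exact le_rfl
    · exact mul_nonneg (le_max_right _ _) (Real.iInf_nonneg (hprod_nonneg j))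
  rcases eq_or_ne (f l xstar) 0 with h | h
  · rw [h]; exact min_eq_right (hfnn n)
  · have hfn : f n xstar = 0 := by
      rw [hdef] at h
      by_cases hl0 : xstar (e l) = 0
      · exact absurd (if_pos hl0) h
      rw [if_neg hl0] at h
      have hmax := (mul_ne_zero_iff.mp h).1
      have hpos : 0 < |xstar (e l)| - N l * sSup ((fun m => |xstar (e m)|) '' Set.Iio l) := by
        by_contra hle
        push_neg at hle
        exact hmax (max_eq_right hle)
      rw [hdef]
      by_cases hn0 : xstar (e n) = 0
      · exact if_pos hn0
      rw [if_neg hn0]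
      have hnpos : 0 < |xstar (e n)| := abs_pos.mpr hn0
      have hbdd : BddAbove ((fun m => |xstar (e m)|) '' Set.Iio l) :=
        ((Set.finite_Iio l).image _).bddAbove
      have hsup : |xstar (e n)| ≤ sSup ((fun m => |xstar (e m)|) '' Set.Iio l) :=
        le_csSup hbdd ⟨n, hnl, rfl⟩
      have hNl : 0 < N l := (hMN l).1.trans (hMN l).2
      have hratio : N l ≤ |xstar (e l)| / |xstar (e n)| := by
        rw [le_div_iff₀ hnpos]
        have : N l * |xstar (e n)| ≤ N l * sSup ((fun m => |xstar (e m)|) '' Set.Iio l) :=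
          mul_le_mul_of_nonneg_left hsup hNl.le
        linarith
      have hgl : g l (|xstar (e l)| / |xstar (e n)|) = 0 := hgzero l _ hratio
      have hinf : (⨅ k : ℕ, ∏ m ∈ Finset.Ioc n (n + k),
          g m (|xstar (e m)| / |xstar (e n)|)) = 0 := by
        refine le_antisymm ?_ (Real.iInf_nonneg (hprod_nonneg n))
        have hle : (⨅ k : ℕ, ∏ m ∈ Finset.Ioc n (n + k),
            g m (|xstar (e m)| / |xstar (e n)|)) ≤
            ∏ m ∈ Finset.Ioc n (n + (l - n)), g m (|xstar (e m)| / |xstar (e n)|) :=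
          ciInf_le ⟨0, fun x ⟨k, hk⟩ => hk ▸ hprod_nonneg n k⟩ (l - n)
        have hprod0 : (∏ m ∈ Finset.Ioc n (n + (l - n)),
            g m (|xstar (e m)| / |xstar (e n)|)) = 0 := by
          apply Finset.prod_eq_zero (i := l) _ hgl
          simp [Finset.mem_Ioc, hnl, Nat.add_sub_cancel' hnl.le]
        rw [hprod0] at hle
        exact hle
      rw [hinf, mul_zero]
    rw [hfn]; exact min_eq_left (hfnn l)
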